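/- Assume 0 < h < 1 and 2/h ∉ ℤ, set n₀ = ⌊2/h⌋, and let L : (0,∞) → ℕ satisfy L(β) ≥ 2(n₀+2) for all β, lim_{β→∞} L(β)·( e^{−[(n₀+1)h−2]β} + e^{−hβ} ) = 0 and lim_{β→∞} L(β)⁴·e^{−(2−h)β} = 0. For each β, working on Ω_{L(β)}: lim_{β→∞} Cap_β({+1}, {-1, 0}) / Cap_β({0}, {-1, +1}) = 1. -/

import Mathlib

open Classical Finset Filter Topology

noncomputable section

namespace BC

/-- Sites of the two-dimensional discrete torus of side `L`. -/
abbrev Site (L : ℕ) := ZMod L × ZMod L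

/-- Spin configurations: a spin `s : Fin 3` at a site encodes the value `s - 1 ∈ {-1,0,1}`. -/
abbrev Cfg (L : ℕ) := Site L → Fin 3

/-- The spin value in `{-1, 0, 1}` encoded by an element of `Fin 3`. -/
def sval (s : Fin 3) : ℤ := (s : ℤ) - 1

/-- The critical length `n₀ = ⌊2/h⌋`. -/
def n0 (h : ℝ) : ℕ := ⌊(2 : ℝ) / h⌋₊

/-- The configuration `-1` with all spins equal to `-1`. -/
def cminus (L : ℕ) : Cfg L := fun _ => 0

/-- The configuration `0` with all spins equal to `0`. -/
def czero (L : ℕ) : Cfg L := fun _ => 1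

/-- The configuration `+1` with all spins equal to `+1`. -/
def cplus (L : ℕ) : Cfg L := fun _ => 2

/-- Nearest-neighbour relation on the torus. -/
def nbr (L : ℕ) (x y : Site L) : Prop :=
  y = x + (1, 0) ∨ y = x - (1, 0) ∨ y = x + (0, 1) ∨ y = x - (0, 1)

/-- The four nearest neighbours of a site, as a finite set. -/
def nbrFinset (L : ℕ) (x : Site L) : Finset (Site L) :=
  {x + (1, 0), x - (1, 0), x + (0, 1), x - (0, 1)}

/-- The torus viewed as a simple graph with nearest-neighbour adjacency. -/
def torusGraph (L : ℕ) : SimpleGraph (Site L) where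
  Adj x y := x ≠ y ∧ nbr L x y
  symm := by
    constructor
    rintro x y ⟨hne, hn⟩
    refine ⟨hne.symm, ?_⟩
    unfold nbr at hn ⊢
    rcases hn with h1 | h1 | h1 | h1 <;> subst h1 <;> simp
  loopless := by constructor; rintro x ⟨hne, -⟩; exact hne rfl

/-- The `s × t` rectangle of sites with lower-left corner `a`. -/
def rect (L : ℕ) (a : Site L) (s t : ℕ) : Finset (Site L) :=
  (Finset.range s ×ˢ Finset.range t).image
    (fun p => (a.1 + (p.1 : ZMod L), a.2 + (p.2 : ZMod L)))

/-- The four corners of the `s × t` rectangle with lower-left corner `a`. -/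
def corners (L : ℕ) (a : Site L) (s t : ℕ) : Finset (Site L) :=
  {(a.1, a.2), (a.1 + ((s - 1 : ℕ) : ZMod L), a.2),
   (a.1, a.2 + ((t - 1 : ℕ) : ZMod L)),
   (a.1 + ((s - 1 : ℕ) : ZMod L), a.2 + ((t - 1 : ℕ) : ZMod L))}

/-- `S` is an `n × (n+1)` rectangle (in either orientation). -/
def isCritRect (L n : ℕ) (S : Finset (Site L)) : Prop :=
  ∃ a : Site L, S = rect L a n (n + 1) ∨ S = rect L a (n + 1) n

/-- `S` is an `n × (n+1)` rectangle plus an extra site attached to a longest side. -/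
def critRl (L n : ℕ) (S : Finset (Site L)) : Prop :=
  ∃ (a : Site L) (i : ℕ), i ≤ n ∧
    (S = insert (a.1 + (i : ZMod L), a.2 - 1) (rect L a (n + 1) n) ∨
     S = insert (a.1 + (i : ZMod L), a.2 + (n : ZMod L)) (rect L a (n + 1) n) ∨
     S = insert (a.1 - 1, a.2 + (i : ZMod L)) (rect L a n (n + 1)) ∨
     S = insert (a.1 + (n : ZMod L), a.2 + (i : ZMod L)) (rect L a n (n + 1)))

/-- `S` is an `n × (n+1)` rectangle plus an extra site attached to a longest side,
next to a corner of the rectangle. -/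
def critRlc (L n : ℕ) (S : Finset (Site L)) : Prop :=
  ∃ (a : Site L) (i : ℕ), i ≤ n ∧ (i = 0 ∨ i = n) ∧
    (S = insert (a.1 + (i : ZMod L), a.2 - 1) (rect L a (n + 1) n) ∨
     S = insert (a.1 + (i : ZMod L), a.2 + (n : ZMod L)) (rect L a (n + 1) n) ∨
     S = insert (a.1 - 1, a.2 + (i : ZMod L)) (rect L a n (n + 1)) ∨
     S = insert (a.1 + (n : ZMod L), a.2 + (i : ZMod L)) (rect L a n (n + 1)))

/-- `S` is an `n × (n+1)` rectangle plus an extra site attached to a longest side,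
away from the corners of the rectangle. -/
def critRli (L n : ℕ) (S : Finset (Site L)) : Prop :=
  ∃ (a : Site L) (i : ℕ), 0 < i ∧ i < n ∧
    (S = insert (a.1 + (i : ZMod L), a.2 - 1) (rect L a (n + 1) n) ∨
     S = insert (a.1 + (i : ZMod L), a.2 + (n : ZMod L)) (rect L a (n + 1) n) ∨
     S = insert (a.1 - 1, a.2 + (i : ZMod L)) (rect L a n (n + 1)) ∨
     S = insert (a.1 + (n : ZMod L), a.2 + (i : ZMod L)) (rect L a n (n + 1)))

/-- `S` is an `n × (n+1)` rectangle plus an extra site attached to a shortest side. -/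
def critRs (L n : ℕ) (S : Finset (Site L)) : Prop :=
  ∃ (a : Site L) (j : ℕ), j < n ∧
    (S = insert (a.1 - 1, a.2 + (j : ZMod L)) (rect L a (n + 1) n) ∨
     S = insert (a.1 + ((n + 1 : ℕ) : ZMod L), a.2 + (j : ZMod L)) (rect L a (n + 1) n) ∨
     S = insert (a.1 + (j : ZMod L), a.2 - 1) (rect L a n (n + 1)) ∨
     S = insert (a.1 + (j : ZMod L), a.2 + ((n + 1 : ℕ) : ZMod L)) (rect L a n (n + 1)))

/-- `S` is an `n × (n+1)` rectangle plus two mutually adjacent extra sites, each attached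
to a longest side. -/
def critRl2 (L n : ℕ) (S : Finset (Site L)) : Prop :=
  ∃ (a : Site L) (i : ℕ), i + 1 ≤ n ∧
    (S = rect L a (n + 1) n ∪
        {(a.1 + (i : ZMod L), a.2 - 1), (a.1 + (i : ZMod L) + 1, a.2 - 1)} ∨
     S = rect L a (n + 1) n ∪
        {(a.1 + (i : ZMod L), a.2 + (n : ZMod L)), (a.1 + (i : ZMod L) + 1, a.2 + (n : ZMod L))} ∨
     S = rect L a n (n + 1) ∪
        {(a.1 - 1, a.2 + (i : ZMod L)), (a.1 - 1, a.2 + (i : ZMod L) + 1)} ∨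
     S = rect L a n (n + 1) ∪
        {(a.1 + (n : ZMod L), a.2 + (i : ZMod L)), (a.1 + (n : ZMod L), a.2 + (i : ZMod L) + 1)})

section

variable (L : ℕ) [NeZero L]

/-- The Blume-Capel Hamiltonian with zero chemical potential and magnetic field `h`. -/
def ham (h : ℝ) (σ : Cfg L) : ℝ :=
  (∑ x : Site L,
     (((sval (σ (x + (1, 0))) : ℝ) - (sval (σ x) : ℝ)) ^ 2 +
      ((sval (σ (x + (0, 1))) : ℝ) - (sval (σ x) : ℝ)) ^ 2)) -
  h * ∑ x : Site L, (sval (σ x) : ℝ)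

/-- The set `A(σ)` of sites where the spin differs from `-1`. -/
def Asites (σ : Cfg L) : Finset (Site L) := univ.filter fun x => σ x ≠ 0

/-- `N(σ)`, the number of spins different from `-1`. -/
def Nsz (σ : Cfg L) : ℕ := (Asites L σ).card

/-- The set of sites where the spin differs from `0`. -/
def A0sites (σ : Cfg L) : Finset (Site L) := univ.filter fun x => σ x ≠ 1

/-- `σ^{x,+}` : flip the spin at `x` by `+1 mod 3`. -/
def flipUp (σ : Cfg L) (x : Site L) : Cfg L := Function.update σ x (σ x + 1)

/-- `σ^{x,-}` : flip the spin at `x` by `-1 mod 3`. -/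
def flipDown (σ : Cfg L) (x : Site L) : Cfg L := Function.update σ x (σ x - 1)

/-- Metropolis jump rate. -/
def rate (h β : ℝ) (σ τ : Cfg L) : ℝ := Real.exp (-β * max (ham L h τ - ham L h σ) 0)

/-- Holding rate `λ_β`. -/
def lam (h β : ℝ) (σ : Cfg L) : ℝ :=
  ∑ x : Site L, (rate L h β σ (flipUp L σ x) + rate L h β σ (flipDown L σ x))

/-- One-step average of `u` under the jump probabilities `p_β = R_β/λ_β`. -/
def avg (h β : ℝ) (u : Cfg L → ℝ) (σ : Cfg L) : ℝ :=
  (∑ x : Site L,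
     (rate L h β σ (flipUp L σ x) * u (flipUp L σ x) +
      rate L h β σ (flipDown L σ x) * u (flipDown L σ x))) / lam L h β σ

/-- `u` is harmonic (w.r.t. the jump probabilities `p_β`) on `D`. -/
def harmOn (h β : ℝ) (u : Cfg L → ℝ) (D : Set (Cfg L)) : Prop :=
  ∀ η ∈ D, u η = avg L h β u η

/-- Unnormalised Gibbs weight `e^{-β ℍ(σ)}`. -/
def gw (h β : ℝ) (σ : Cfg L) : ℝ := Real.exp (-β * ham L h σ)

/-- Two configurations differ at exactly one site. -/
def oneDiff (σ τ : Cfg L) : Prop := (univ.filter fun x => σ x ≠ τ x).card = 1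

/-- Dirichlet form of the chain reflected in `V`. -/
def dirV (h β : ℝ) (V : Set (Cfg L)) (f : Cfg L → ℝ) : ℝ :=
  (1 / 2) * ∑ σ : Cfg L, ∑ τ : Cfg L,
    if σ ∈ V ∧ τ ∈ V ∧ oneDiff L σ τ
    then min (gw L h β σ) (gw L h β τ) * (f τ - f σ) ^ 2 else 0

/-- Capacity (via the Dirichlet principle) for the chain reflected in `V`. -/
def capV (h β : ℝ) (V A B : Set (Cfg L)) : ℝ :=
  sInf { e : ℝ | ∃ f : Cfg L → ℝ, (∀ σ, 0 ≤ f σ ∧ f σ ≤ 1) ∧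
        (∀ σ ∈ A, f σ = 1) ∧ (∀ σ ∈ B, f σ = 0) ∧ e = dirV L h β V f }

/-- Dirichlet form of the full chain. -/
def dirForm (h β : ℝ) (f : Cfg L → ℝ) : ℝ :=
  (1 / 2) * ∑ σ : Cfg L, ∑ x : Site L,
    (min (gw L h β σ) (gw L h β (flipUp L σ x)) * (f (flipUp L σ x) - f σ) ^ 2 +
     min (gw L h β σ) (gw L h β (flipDown L σ x)) * (f (flipDown L σ x) - f σ) ^ 2)

/-- Capacity via the Dirichlet variational principle. -/
def capa (h β : ℝ) (A B : Set (Cfg L)) : ℝ :=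
  sInf { e : ℝ | ∃ f : Cfg L → ℝ, (∀ σ, 0 ≤ f σ ∧ f σ ≤ 1) ∧
        (∀ σ ∈ A, f σ = 1) ∧ (∀ σ ∈ B, f σ = 0) ∧ e = dirForm L h β f }

/-- Holding rate of the chain reflected in `V`. -/
def lamV (h β : ℝ) (V : Set (Cfg L)) (σ : Cfg L) : ℝ :=
  ∑ x : Site L,
    ((if flipUp L σ x ∈ V then rate L h β σ (flipUp L σ x) else 0) +
     (if flipDown L σ x ∈ V then rate L h β σ (flipDown L σ x) else 0))

/-- One-step average for the chain reflected in `V`. -/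
def avgV (h β : ℝ) (V : Set (Cfg L)) (u : Cfg L → ℝ) (σ : Cfg L) : ℝ :=
  (∑ x : Site L,
    ((if flipUp L σ x ∈ V then rate L h β σ (flipUp L σ x) * u (flipUp L σ x) else 0) +
     (if flipDown L σ x ∈ V then rate L h β σ (flipDown L σ x) * u (flipDown L σ x) else 0))) /
  lamV L h β V σ

/-- `R` : `0`-spins forming an `n × (n+1)` rectangle in a sea of `-1`-spins. -/
def setR (n : ℕ) : Set (Cfg L) :=
  {σ | (∀ x, σ x ≠ 2) ∧ isCritRect L n (Asites L σ)}

/-- `B` : configurations with exactly `n(n+1)` spins different from `-1`. -/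
def setB (n : ℕ) : Set (Cfg L) := {σ | Nsz L σ = n * (n + 1)}

/-- `R⁺` : an `n × (n+1)` rectangle of `0`-spins plus one extra spin (`0` or `+1`)
outside the rectangle, in a sea of `-1`-spins. -/
def setRplus (n : ℕ) : Set (Cfg L) :=
  {σ | ∃ (S : Finset (Site L)) (z : Site L), isCritRect L n S ∧ z ∉ S ∧
       Asites L σ = insert z S ∧ ∀ x ∈ S, σ x = 1}

/-- `Rᵃ` : an `n × (n+1)` rectangle of `0`-spins plus one extra `0`-spin attached to the
rectangle, in a sea of `-1`-spins. -/
def setRa (n : ℕ) : Set (Cfg L) :=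
  {σ | ∃ (S : Finset (Site L)) (z : Site L), isCritRect L n S ∧ z ∉ S ∧
       Asites L σ = insert z S ∧ (∀ x ∈ S, σ x = 1) ∧ σ z = 1 ∧ ∃ y ∈ S, nbr L z y}

/-- The valley `V₋₁` of the configuration `-1`. -/
def valleyM (n : ℕ) : Set (Cfg L) := {σ | Nsz L σ ≤ n * (n + 1)} ∪ setRplus L n

/-- `B⁺`, the boundary of the valley of `-1`. -/
def setBplus (n : ℕ) : Set (Cfg L) := (setB L n \ setR L n) ∪ setRplus L n

/-- `Rˡ` : critical droplet with the protuberance attached to a longest side. -/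
def setRl (n : ℕ) : Set (Cfg L) :=
  {σ | (∀ x, σ x ≠ 2) ∧ critRl L n (Asites L σ) ∧ Nsz L σ = n * (n + 1) + 1}

/-- `Rˡᶜ` : protuberance attached to a longest side next to a corner. -/
def setRlc (n : ℕ) : Set (Cfg L) :=
  {σ | (∀ x, σ x ≠ 2) ∧ critRlc L n (Asites L σ) ∧ Nsz L σ = n * (n + 1) + 1}

/-- `Rˡⁱ` : protuberance attached to a longest side away from the corners. -/
def setRli (n : ℕ) : Set (Cfg L) :=
  {σ | (∀ x, σ x ≠ 2) ∧ critRli L n (Asites L σ) ∧ Nsz L σ = n * (n + 1) + 1}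

/-- `Rˢ` : protuberance attached to a shortest side. -/
def setRs (n : ℕ) : Set (Cfg L) :=
  {σ | (∀ x, σ x ≠ 2) ∧ critRs L n (Asites L σ) ∧ Nsz L σ = n * (n + 1) + 1}

/-- `Rˡ₀` : critical droplet of `+1`-spins in a sea of `0`-spins, protuberance on a
longest side. -/
def setRl0 (n : ℕ) : Set (Cfg L) :=
  {σ | (∀ x, σ x ≠ 0) ∧ critRl L n (A0sites L σ) ∧ (A0sites L σ).card = n * (n + 1) + 1}

/-- The energy `Γ_c` of a critical droplet. -/
def GammaC (h : ℝ) : ℝ :=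
  4 * ((n0 h : ℝ) + 1) - h * (((n0 h * (n0 h + 1) + 1 : ℕ) : ℝ) - (L : ℝ) ^ 2)

/-- `δ₁(β) = e^{-hβ} + |Λ|^{1/2} e^{-(2-h)β} + |Λ| e^{-(4-h)β}`. -/
def delta1 (h β : ℝ) : ℝ :=
  Real.exp (-h * β) + (L : ℝ) * Real.exp (-(2 - h) * β) +
    (L : ℝ) ^ 2 * Real.exp (-(4 - h) * β)

/-- `δ₅(β) = e^{-[(n₀+1)h-2]β} + e^{-hβ} + |Λ|^{3/2} e^{-(2-h)β}`. -/
def delta5 (h β : ℝ) : ℝ :=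
  Real.exp (-(((n0 h : ℝ) + 1) * h - 2) * β) + Real.exp (-h * β) +
    (L : ℝ) ^ 3 * Real.exp (-(2 - h) * β)

/-- `δ(β) = |Λ|^{1/2} e^{-[(n₀+1)h-2]β} + |Λ|^{1/2} e^{-hβ} + |Λ|² e^{-(2-h)β}`. -/
def deltaP (h β : ℝ) : ℝ :=
  (L : ℝ) * Real.exp (-(((n0 h : ℝ) + 1) * h - 2) * β) + (L : ℝ) * Real.exp (-h * β) +
    (L : ℝ) ^ 4 * Real.exp (-(2 - h) * β)

end

end BC

namespace BCAux
open BC Real Finset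

set_option linter.unusedSectionVars false

variable (L : ℕ) [NeZero L] (h β : ℝ)

lemma card_site : (Fintype.card (Site L)) = L * L := by
  simp [Fintype.card_prod, ZMod.card]

lemma one_ne_zero_zmod (hL2 : 2 ≤ L) : (1 : ZMod L) ≠ 0 := by
  haveI : Fact (1 < L) := ⟨hL2⟩
  intro hc
  have := congrArg ZMod.val hc
  rw [ZMod.val_one, ZMod.val_zero] at this
  omega

lemma add_e1_ne (hL2 : 2 ≤ L) (x : Site L) : x + ((1 : ZMod L), (0 : ZMod L)) ≠ x := by
  intro he
  have h1 : x.1 + 1 = x.1 := congrArg Prod.fst he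
  exact one_ne_zero_zmod L hL2 (by
    have := h1
    nth_rewrite 2 [show x.1 = x.1 + 0 by rw [add_zero]] at this
    exact add_left_cancel this)

lemma add_e2_ne (hL2 : 2 ≤ L) (x : Site L) : x + ((0 : ZMod L), (1 : ZMod L)) ≠ x := by
  intro he
  have h1 : x.2 + 1 = x.2 := congrArg Prod.snd he
  exact one_ne_zero_zmod L hL2 (by
    have := h1
    nth_rewrite 2 [show x.2 = x.2 + 0 by rw [add_zero]] at this
    exact add_left_cancel this)

lemma flipDown_flipUp (σ : Cfg L) (x : Site L) : flipDown L (flipUp L σ x) x = σ := by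
  funext z
  rcases eq_or_ne z x with rfl | hz
  · simp [flipUp, flipDown]
  · simp [flipUp, flipDown, Function.update_of_ne hz]

lemma flipUp_flipDown (σ : Cfg L) (x : Site L) : flipUp L (flipDown L σ x) x = σ := by
  funext z
  rcases eq_or_ne z x with rfl | hz
  · simp [flipUp, flipDown]
  · simp [flipUp, flipDown, Function.update_of_ne hz]

lemma gw_pos (σ : Cfg L) : 0 < gw L h β σ := Real.exp_pos _

lemma gw_le (hβ : 0 ≤ β) {σ : Cfg L} {E : ℝ} (hE : E ≤ ham L h σ) :
    gw L h β σ ≤ Real.exp (-β * E) := by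
  rw [gw]
  apply Real.exp_le_exp.2
  nlinarith

lemma le_gw (hβ : 0 ≤ β) {σ : Cfg L} {E : ℝ} (hE : ham L h σ ≤ E) :
    Real.exp (-β * E) ≤ gw L h β σ := by
  rw [gw]
  apply Real.exp_le_exp.2
  nlinarith

lemma ham_up_cminus (hL2 : 2 ≤ L) (x : Site L) :
    2 + h * ((L : ℝ) ^ 2 - 1) ≤ ham L h (flipUp L (cminus L) x) := by
  have hσ : flipUp L (cminus L) x = Function.update (cminus L) x 1 := rfl
  set σ := flipUp L (cminus L) x with hσdef
  have hσx : σ x = 1 := by rw [hσ]; simp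
  have hσy : ∀ y, y ≠ x → σ y = 0 := by
    intro y hy; rw [hσ, Function.update_of_ne hy]; rfl
  rw [ham]
  have hfield : (∑ y : Site L, (sval (σ y) : ℝ)) = 1 - (L : ℝ) ^ 2 := by
    have hpt : ∀ y : Site L, (sval (σ y) : ℝ) = (if y = x then (1 : ℝ) else 0) - 1 := by
      intro y
      rcases eq_or_ne y x with rfl | hy
      · simp [hσx, sval]
      · simp [hσy y hy, hy, sval]
    rw [Finset.sum_congr rfl (fun y _ => hpt y), Finset.sum_sub_distrib,
      Finset.sum_ite_eq' Finset.univ x (fun _ => (1 : ℝ))]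
    simp [card_site]
    push_cast
    ring
  have hint : (2 : ℝ) ≤ ∑ y : Site L,
      (((sval (σ (y + (1, 0))) : ℝ) - (sval (σ y) : ℝ)) ^ 2 +
       ((sval (σ (y + (0, 1))) : ℝ) - (sval (σ y) : ℝ)) ^ 2) := by
    have hterm : ∀ y ∈ Finset.univ, (0:ℝ) ≤
        ((sval (σ (y + (1, 0))) : ℝ) - (sval (σ y) : ℝ)) ^ 2 +
        ((sval (σ (y + (0, 1))) : ℝ) - (sval (σ y) : ℝ)) ^ 2 :=
      fun y _ => by positivity
    have hx := Finset.single_le_sum hterm (Finset.mem_univ x)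
    have hx1 : σ (x + (1, 0)) = 0 := hσy _ (add_e1_ne L hL2 x)
    have hx2 : σ (x + (0, 1)) = 0 := hσy _ (add_e2_ne L hL2 x)
    have he : ((sval (σ (x + (1, 0))) : ℝ) - (sval (σ x) : ℝ)) ^ 2 +
        ((sval (σ (x + (0, 1))) : ℝ) - (sval (σ x) : ℝ)) ^ 2 = 2 := by
      rw [hx1, hx2, hσx]; norm_num [sval]
    linarith
  rw [hfield]
  nlinarith

lemma ham_down_cminus (hL2 : 2 ≤ L) (x : Site L) :
    8 + h * ((L : ℝ) ^ 2 - 2) ≤ ham L h (flipDown L (cminus L) x) := by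
  have hσ : flipDown L (cminus L) x = Function.update (cminus L) x 2 := rfl
  set σ := flipDown L (cminus L) x with hσdef
  have hσx : σ x = 2 := by rw [hσ]; simp
  have hσy : ∀ y, y ≠ x → σ y = 0 := by
    intro y hy; rw [hσ, Function.update_of_ne hy]; rfl
  rw [ham]
  have hfield : (∑ y : Site L, (sval (σ y) : ℝ)) = 2 - (L : ℝ) ^ 2 := by
    have hpt : ∀ y : Site L, (sval (σ y) : ℝ) = (if y = x then (2 : ℝ) else 0) - 1 := by
      intro y
      rcases eq_or_ne y x with rfl | hy
      · simp [hσx, sval]; norm_num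
      · simp [hσy y hy, hy, sval]
    rw [Finset.sum_congr rfl (fun y _ => hpt y), Finset.sum_sub_distrib,
      Finset.sum_ite_eq' Finset.univ x (fun _ => (2 : ℝ))]
    simp [card_site]
    push_cast
    ring
  have hint : (8 : ℝ) ≤ ∑ y : Site L,
      (((sval (σ (y + (1, 0))) : ℝ) - (sval (σ y) : ℝ)) ^ 2 +
       ((sval (σ (y + (0, 1))) : ℝ) - (sval (σ y) : ℝ)) ^ 2) := by
    have hterm : ∀ y ∈ Finset.univ, (0:ℝ) ≤
        ((sval (σ (y + (1, 0))) : ℝ) - (sval (σ y) : ℝ)) ^ 2 +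
        ((sval (σ (y + (0, 1))) : ℝ) - (sval (σ y) : ℝ)) ^ 2 :=
      fun y _ => by positivity
    have hx := Finset.single_le_sum hterm (Finset.mem_univ x)
    have hx1 : σ (x + (1, 0)) = 0 := hσy _ (add_e1_ne L hL2 x)
    have hx2 : σ (x + (0, 1)) = 0 := hσy _ (add_e2_ne L hL2 x)
    have he : ((sval (σ (x + (1, 0))) : ℝ) - (sval (σ x) : ℝ)) ^ 2 +
        ((sval (σ (x + (0, 1))) : ℝ) - (sval (σ x) : ℝ)) ^ 2 = 8 := by
      rw [hx1, hx2, hσx]; norm_num [sval]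
    linarith
  rw [hfield]
  nlinarith

end BCAux

namespace BCAux
open BC Real Finset

set_option linter.unusedSectionVars false

variable (L : ℕ) [NeZero L] (h β : ℝ)

/-- The `k`-th configuration on the lexicographic path from `0` to `+1`. -/
def pcfg (k : ℕ) : Cfg L := fun y => if y.2.val * L + y.1.val < k then 2 else 1

/-- The site flipped at step `k`. -/
def psite (k : ℕ) : Site L := (((k % L : ℕ) : ZMod L), ((k / L : ℕ) : ZMod L))

lemma psite_idx {k : ℕ} (hk : k < L * L) :
    (psite L k).2.val * L + (psite L k).1.val = k := by
  have hL0 : 0 < L := NeZero.pos L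
  have hm : k % L < L := Nat.mod_lt _ hL0
  have hd : k / L < L := by
    rw [Nat.div_lt_iff_lt_mul hL0]; exact hk
  show ((((k / L : ℕ)) : ZMod L)).val * L + (((k % L : ℕ) : ZMod L)).val = k
  rw [ZMod.val_cast_of_lt hm, ZMod.val_cast_of_lt hd]
  have h2 : L * (k / L) + k % L = k := Nat.div_add_mod k L
  have h3 : (k / L) * L = L * (k / L) := Nat.mul_comm _ _
  omega

lemma idx_eq_psite {k : ℕ} (z : Site L) (he : z.2.val * L + z.1.val = k) :
    z = psite L k := by
  have hL0 : 0 < L := NeZero.pos L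
  have ha : z.1.val < L := ZMod.val_lt _
  have hb : z.2.val < L := ZMod.val_lt _
  have hdiv : k / L = z.2.val := by
    rw [← he, Nat.add_comm, Nat.add_mul_div_right _ _ hL0, Nat.div_eq_of_lt ha]
    omega
  have hmod : k % L = z.1.val := by
    rw [← he, Nat.mul_comm, Nat.mul_add_mod, Nat.mod_eq_of_lt ha]
  have h1 : z.1 = ((k % L : ℕ) : ZMod L) := by
    rw [hmod]; exact (ZMod.natCast_rightInverse z.1).symm
  have h2 : z.2 = ((k / L : ℕ) : ZMod L) := by
    rw [hdiv]; exact (ZMod.natCast_rightInverse z.2).symm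
  rw [psite, ← h1, ← h2]

lemma pcfg_step {k : ℕ} (hk : k < L * L) :
    flipUp L (pcfg L k) (psite L k) = pcfg L (k + 1) := by
  funext z
  rcases eq_or_ne z (psite L k) with rfl | hz
  · rw [flipUp, Function.update_self]
    have hidx := psite_idx L hk
    simp only [pcfg, hidx, lt_irrefl, if_neg (lt_irrefl k), if_pos (Nat.lt_succ_self k)]
    decide
  · rw [flipUp, Function.update_of_ne hz]
    have hne : z.2.val * L + z.1.val ≠ k := fun he => hz (idx_eq_psite L z he)
    have : (z.2.val * L + z.1.val < k) = (z.2.val * L + z.1.val < k + 1) := by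
      apply propext; omega
    simp only [pcfg, this]

lemma pcfg_zero : pcfg L 0 = czero L := by
  funext y; simp [pcfg, czero]

lemma pcfg_top : pcfg L (L * L) = cplus L := by
  funext y
  have ha : y.1.val < L := ZMod.val_lt _
  have hb : y.2.val < L := ZMod.val_lt _
  have he : (y.2.val + 1) * L ≤ L * L := by
    have := Nat.mul_le_mul_right L (show y.2.val + 1 ≤ L from hb)
    exact this
  rw [Nat.succ_mul] at he
  simp only [pcfg, cplus, if_pos (show y.2.val * L + y.1.val < L * L by omega)]

lemma pcfg_ne {k k' : ℕ} (hlt : k < k') (hk : k < L * L) :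
    pcfg L k ≠ pcfg L k' := by
  intro he
  have h1 := congrFun he (psite L k)
  have hidx := psite_idx L hk
  simp only [pcfg, hidx, if_neg (lt_irrefl k), if_pos hlt] at h1
  exact absurd h1 (by decide)

lemma sval_pcfg (k : ℕ) (z : Site L) :
    ((sval (pcfg L k z)) : ℝ) = if z.2.val * L + z.1.val < k then 1 else 0 := by
  by_cases hc : z.2.val * L + z.1.val < k <;> simp [pcfg, hc, sval]

lemma ite01_nonneg (P : Prop) [Decidable P] : (0:ℝ) ≤ if P then 1 else 0 := by
  split <;> norm_num

lemma ite01_le_one (P : Prop) [Decidable P] : (if P then (1:ℝ) else 0) ≤ 1 := by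
  split <;> norm_num

lemma sq_ite_le_one (P Q : Prop) [Decidable P] [Decidable Q] :
    ((if P then (1:ℝ) else 0) - (if Q then 1 else 0)) ^ 2 ≤ 1 := by
  split_ifs <;> norm_num

lemma sq_ite_iff (P Q : Prop) [Decidable P] [Decidable Q] (hPQ : P ↔ Q) :
    ((if P then (1:ℝ) else 0) - (if Q then 1 else 0)) ^ 2 = 0 := by
  rw [if_congr hPQ rfl rfl]; ring

lemma Ph (k : ℕ) (y : Site L) :
    ((sval (pcfg L k (y + (1, 0))) : ℝ) - (sval (pcfg L k y) : ℝ)) ^ 2 ≤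
      if y.2.val = k / L then (1:ℝ) else 0 := by
  have hy : y + ((1 : ZMod L), (0 : ZMod L)) = (y.1 + 1, y.2) := by
    cases y; rw [Prod.mk_add_mk, add_zero]
  rw [hy, sval_pcfg, sval_pcfg]
  by_cases hb : y.2.val = k / L
  · rw [if_pos hb]; exact sq_ite_le_one _ _
  · rw [if_neg hb]
    have hL0 : 0 < L := NeZero.pos L
    have ha : (y.1 + 1).val < L := ZMod.val_lt _
    have ha' : y.1.val < L := ZMod.val_lt _
    have hb' : y.2.val < L := ZMod.val_lt _
    have hjr : (k / L) * L + k % L = k := by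
      rw [Nat.mul_comm]; exact Nat.div_add_mod k L
    have hr : k % L < L := Nat.mod_lt _ hL0
    have hiff : ((y.1 + 1, y.2).2.val * L + (y.1 + 1, y.2).1.val < k) ↔
        (y.2.val * L + y.1.val < k) := by
      show (y.2.val * L + (y.1 + 1).val < k) ↔ (y.2.val * L + y.1.val < k)
      rcases Nat.lt_trichotomy y.2.val (k / L) with hbj | hbj | hbj
      · have h1 : (y.2.val + 1) * L ≤ (k / L) * L := Nat.mul_le_mul_right _ (by omega)
        rw [Nat.succ_mul] at h1
        exact iff_of_true (by omega) (by omega)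
      · exact absurd hbj hb
      · have h1 : (k / L + 1) * L ≤ y.2.val * L := Nat.mul_le_mul_right _ (by omega)
        rw [Nat.succ_mul] at h1
        exact iff_of_false (by omega) (by omega)
    rw [sq_ite_iff _ _ hiff]

lemma Pv (hL2 : 2 ≤ L) (k : ℕ) (y : Site L) :
    ((sval (pcfg L k (y + (0, 1))) : ℝ) - (sval (pcfg L k y) : ℝ)) ^ 2 ≤
      (if y.2.val = k / L then (1:ℝ) else 0) +
      (if y.2.val + 1 = k / L then (1:ℝ) else 0) +
      (if y.2.val = L - 1 then (1:ℝ) else 0) := by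
  have hy : y + ((0 : ZMod L), (1 : ZMod L)) = (y.1, y.2 + 1) := by
    cases y; rw [Prod.mk_add_mk, add_zero]
  rw [hy, sval_pcfg, sval_pcfg]
  by_cases h3 : y.2.val = L - 1
  · have := sq_ite_le_one ((y.1, y.2 + 1).2.val * L + (y.1, y.2 + 1).1.val < k)
      (y.2.val * L + y.1.val < k)
    have g1 := ite01_nonneg (y.2.val = k / L)
    have g2 := ite01_nonneg (y.2.val + 1 = k / L)
    rw [if_pos h3]
    linarith
  · by_cases h1 : y.2.val = k / L
    · have := sq_ite_le_one ((y.1, y.2 + 1).2.val * L + (y.1, y.2 + 1).1.val < k)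
        (y.2.val * L + y.1.val < k)
      have g2 := ite01_nonneg (y.2.val + 1 = k / L)
      have g3 := ite01_nonneg (y.2.val = L - 1)
      rw [if_pos h1]
      linarith
    · by_cases h2 : y.2.val + 1 = k / L
      · have := sq_ite_le_one ((y.1, y.2 + 1).2.val * L + (y.1, y.2 + 1).1.val < k)
          (y.2.val * L + y.1.val < k)
        have g1 := ite01_nonneg (y.2.val = k / L)
        have g3 := ite01_nonneg (y.2.val = L - 1)
        rw [if_pos h2]
        linarith
      · haveI : Fact (1 < L) := ⟨hL2⟩
        have hL0 : 0 < L := NeZero.pos L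
        have ha : y.1.val < L := ZMod.val_lt _
        have hb : y.2.val < L := ZMod.val_lt _
        have hval : (y.2 + 1).val = y.2.val + 1 := by
          rw [ZMod.val_add_of_lt]
          · rw [ZMod.val_one]
          · rw [ZMod.val_one]; omega
        have hjr : (k / L) * L + k % L = k := by
          rw [Nat.mul_comm]; exact Nat.div_add_mod k L
        have hr : k % L < L := Nat.mod_lt _ hL0
        have hiff : ((y.1, y.2 + 1).2.val * L + (y.1, y.2 + 1).1.val < k) ↔
            (y.2.val * L + y.1.val < k) := by
          show ((y.2 + 1).val * L + y.1.val < k) ↔ (y.2.val * L + y.1.val < k)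
          rw [hval]
          rcases Nat.lt_trichotomy (y.2.val + 1) (k / L) with hbj | hbj | hbj
          · have e1 : (y.2.val + 1 + 1) * L ≤ (k / L) * L := Nat.mul_le_mul_right _ (by omega)
            rw [Nat.succ_mul, Nat.succ_mul] at e1
            have e2 : (y.2.val + 1) * L = y.2.val * L + L := Nat.succ_mul _ _
            exact iff_of_true (by omega) (by omega)
          · exact absurd hbj h2
          · have e1 : (k / L + 1) * L ≤ y.2.val * L := Nat.mul_le_mul_right _ (by omega)
            rw [Nat.succ_mul] at e1
            have e2 : (y.2.val + 1) * L = y.2.val * L + L := Nat.succ_mul _ _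
            exact iff_of_false (by omega) (by omega)
        rw [sq_ite_iff _ _ hiff]
        have g1 := ite01_nonneg (y.2.val = k / L)
        have g2 := ite01_nonneg (y.2.val + 1 = k / L)
        have g3 := ite01_nonneg (y.2.val = L - 1)
        linarith

lemma sum_ite_site_le (P : ℕ → Prop) [DecidablePred P]
    (hP : ∀ v w, v < L → w < L → P v → P w → v = w) :
    ∑ y : Site L, (if P y.2.val then (1:ℝ) else 0) ≤ L := by
  rw [Fintype.sum_prod_type]
  have inner : ∀ a : ZMod L, (∑ b : ZMod L, if P ((a, b).2.val) then (1:ℝ) else 0) ≤ 1 := by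
    intro a
    simp only
    rw [Finset.sum_boole]
    have hcard : (Finset.filter (fun b : ZMod L => P b.val) Finset.univ).card ≤ 1 := by
      apply Finset.card_le_one.2
      intro b hb b' hb'
      rw [Finset.mem_filter] at hb hb'
      exact ZMod.val_injective L (hP _ _ (ZMod.val_lt _) (ZMod.val_lt _) hb.2 hb'.2)
    exact_mod_cast hcard
  calc (∑ a : ZMod L, ∑ b : ZMod L, if P ((a, b).2.val) then (1:ℝ) else 0)
      ≤ ∑ _a : ZMod L, (1:ℝ) := Finset.sum_le_sum (fun a _ => inner a)
    _ = L := by simp [ZMod.card]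

lemma ham_pcfg_le (hh : 0 ≤ h) (hL2 : 2 ≤ L) (k : ℕ) :
    ham L h (pcfg L k) ≤ 4 * (L : ℝ) := by
  rw [ham]
  have hfield : 0 ≤ ∑ y : Site L, ((sval (pcfg L k y)) : ℝ) := by
    apply Finset.sum_nonneg
    intro y _
    rw [sval_pcfg]
    exact ite01_nonneg _
  have hint : (∑ y : Site L,
      (((sval (pcfg L k (y + (1, 0))) : ℝ) - (sval (pcfg L k y) : ℝ)) ^ 2 +
       ((sval (pcfg L k (y + (0, 1))) : ℝ) - (sval (pcfg L k y) : ℝ)) ^ 2)) ≤ 4 * L := by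
    have hpt : ∀ y : Site L,
        (((sval (pcfg L k (y + (1, 0))) : ℝ) - (sval (pcfg L k y) : ℝ)) ^ 2 +
         ((sval (pcfg L k (y + (0, 1))) : ℝ) - (sval (pcfg L k y) : ℝ)) ^ 2) ≤
        ((if y.2.val = k / L then (1:ℝ) else 0) +
         ((if y.2.val = k / L then (1:ℝ) else 0) +
          (if y.2.val + 1 = k / L then (1:ℝ) else 0) +
          (if y.2.val = L - 1 then (1:ℝ) else 0))) := fun y =>
      add_le_add (Ph L k y) (Pv L hL2 k y)
    calc (∑ y : Site L,
        (((sval (pcfg L k (y + (1, 0))) : ℝ) - (sval (pcfg L k y) : ℝ)) ^ 2 +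
         ((sval (pcfg L k (y + (0, 1))) : ℝ) - (sval (pcfg L k y) : ℝ)) ^ 2))
        ≤ ∑ y : Site L, ((if y.2.val = k / L then (1:ℝ) else 0) +
            ((if y.2.val = k / L then (1:ℝ) else 0) +
             (if y.2.val + 1 = k / L then (1:ℝ) else 0) +
             (if y.2.val = L - 1 then (1:ℝ) else 0))) :=
          Finset.sum_le_sum (fun y _ => hpt y)
      _ = (∑ y : Site L, (if y.2.val = k / L then (1:ℝ) else 0)) +
          ((∑ y : Site L, (if y.2.val = k / L then (1:ℝ) else 0)) +
           (∑ y : Site L, (if y.2.val + 1 = k / L then (1:ℝ) else 0)) +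
           (∑ y : Site L, (if y.2.val = L - 1 then (1:ℝ) else 0))) := by
          rw [Finset.sum_add_distrib, Finset.sum_add_distrib, Finset.sum_add_distrib]
      _ ≤ L + (L + L + L) := by
          have s1 := sum_ite_site_le L (fun v => v = k / L) (fun v w _ _ hv hw => hv.trans hw.symm)
          have s2 := sum_ite_site_le L (fun v => v + 1 = k / L) (fun v w _ _ hv hw => by omega)
          have s3 := sum_ite_site_le L (fun v => v = L - 1) (fun v w _ _ hv hw => hv.trans hw.symm)
          gcongr
      _ = 4 * L := by ring
  nlinarith

end BCAux

namespace BCAux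
open BC Real Finset

set_option linter.unusedSectionVars false

variable (L : ℕ) [NeZero L] (h β : ℝ)

lemma dirForm_term_nonneg (f : Cfg L → ℝ) (σ : Cfg L) :
    0 ≤ ∑ x : Site L,
      (min (gw L h β σ) (gw L h β (flipUp L σ x)) * (f (flipUp L σ x) - f σ) ^ 2 +
       min (gw L h β σ) (gw L h β (flipDown L σ x)) * (f (flipDown L σ x) - f σ) ^ 2) := by
  apply Finset.sum_nonneg
  intro x _
  have h1 : 0 ≤ min (gw L h β σ) (gw L h β (flipUp L σ x)) :=
    le_min (gw_pos L h β σ).le (gw_pos L h β _).le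
  have h2 : 0 ≤ min (gw L h β σ) (gw L h β (flipDown L σ x)) :=
    le_min (gw_pos L h β σ).le (gw_pos L h β _).le
  have := sq_nonneg (f (flipUp L σ x) - f σ)
  have := sq_nonneg (f (flipDown L σ x) - f σ)
  nlinarith

lemma dirForm_nonneg (f : Cfg L → ℝ) : 0 ≤ dirForm L h β f := by
  rw [dirForm]
  apply mul_nonneg (by norm_num)
  apply Finset.sum_nonneg
  intro σ _
  exact dirForm_term_nonneg L h β f σ

lemma dirForm_one_sub (f : Cfg L → ℝ) :
    dirForm L h β (fun σ => 1 - f σ) = dirForm L h β f := by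
  rw [dirForm, dirForm]
  congr 1
  apply Finset.sum_congr rfl
  intro σ _
  apply Finset.sum_congr rfl
  intro x _
  ring

lemma sq_between {x u y : ℝ} (h1 : x ≤ u) (h2 : u ≤ y) : u ^ 2 ≤ x ^ 2 + y ^ 2 := by
  rcases le_or_gt 0 u with hu | hu <;> nlinarith

lemma sq_min_sub_min (a b c d : ℝ) :
    (min a b - min c d) ^ 2 ≤ (a - c) ^ 2 + (b - d) ^ 2 := by
  rcases le_total a b with hab | hab <;> rcases le_total c d with hcd | hcd
  · rw [min_eq_left hab, min_eq_left hcd]; nlinarith [sq_nonneg (b - d)]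
  · rw [min_eq_left hab, min_eq_right hcd]
    exact sq_between (by linarith) (by linarith)
  · rw [min_eq_right hab, min_eq_left hcd]
    have := sq_between (x := b - d) (u := b - c) (y := a - c) (by linarith) (by linarith)
    linarith
  · rw [min_eq_right hab, min_eq_right hcd]; nlinarith [sq_nonneg (a - c)]

lemma dirForm_min_le (f g : Cfg L → ℝ) :
    dirForm L h β (fun σ => min (f σ) (g σ)) ≤ dirForm L h β f + dirForm L h β g := by
  rw [dirForm, dirForm, dirForm, ← mul_add, ← Finset.sum_add_distrib]
  apply mul_le_mul_of_nonneg_left _ (by norm_num)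
  apply Finset.sum_le_sum
  intro σ _
  rw [← Finset.sum_add_distrib]
  apply Finset.sum_le_sum
  intro x _
  have c1 : 0 ≤ min (gw L h β σ) (gw L h β (flipUp L σ x)) :=
    le_min (gw_pos L h β σ).le (gw_pos L h β _).le
  have c2 : 0 ≤ min (gw L h β σ) (gw L h β (flipDown L σ x)) :=
    le_min (gw_pos L h β σ).le (gw_pos L h β _).le
  have m1 := sq_min_sub_min (f (flipUp L σ x)) (g (flipUp L σ x)) (f σ) (g σ)
  have m2 := sq_min_sub_min (f (flipDown L σ x)) (g (flipDown L σ x)) (f σ) (g σ)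
  have t1 := mul_le_mul_of_nonneg_left m1 c1
  have t2 := mul_le_mul_of_nonneg_left m2 c2
  beta_reduce
  nlinarith

lemma capa_bddBelow (A B : Set (Cfg L)) :
    BddBelow {e : ℝ | ∃ f : Cfg L → ℝ, (∀ σ, 0 ≤ f σ ∧ f σ ≤ 1) ∧
      (∀ σ ∈ A, f σ = 1) ∧ (∀ σ ∈ B, f σ = 0) ∧ e = dirForm L h β f} := by
  refine ⟨0, ?_⟩
  rintro e ⟨f, _, _, _, rfl⟩
  exact dirForm_nonneg L h β f

lemma capa_le (A B : Set (Cfg L)) (f : Cfg L → ℝ)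
    (hf : ∀ σ, 0 ≤ f σ ∧ f σ ≤ 1) (hA : ∀ σ ∈ A, f σ = 1) (hB : ∀ σ ∈ B, f σ = 0) :
    capa L h β A B ≤ dirForm L h β f := by
  rw [capa]
  exact csInf_le (capa_bddBelow L h β A B) ⟨f, hf, hA, hB, rfl⟩

lemma le_capa (A B : Set (Cfg L)) (c : ℝ) (f₀ : Cfg L → ℝ)
    (hf₀ : ∀ σ, 0 ≤ f₀ σ ∧ f₀ σ ≤ 1) (hA₀ : ∀ σ ∈ A, f₀ σ = 1) (hB₀ : ∀ σ ∈ B, f₀ σ = 0)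
    (hc : ∀ f : Cfg L → ℝ, (∀ σ, 0 ≤ f σ ∧ f σ ≤ 1) → (∀ σ ∈ A, f σ = 1) →
      (∀ σ ∈ B, f σ = 0) → c ≤ dirForm L h β f) :
    c ≤ capa L h β A B := by
  rw [capa]
  refine le_csInf ⟨dirForm L h β f₀, f₀, hf₀, hA₀, hB₀, rfl⟩ ?_
  rintro e ⟨f, hf, hA, hB, rfl⟩
  exact hc f hf hA hB

lemma capa_comm (A B : Set (Cfg L)) : capa L h β A B = capa L h β B A := by
  have key : ∀ A B : Set (Cfg L),
      {e : ℝ | ∃ f : Cfg L → ℝ, (∀ σ, 0 ≤ f σ ∧ f σ ≤ 1) ∧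
        (∀ σ ∈ A, f σ = 1) ∧ (∀ σ ∈ B, f σ = 0) ∧ e = dirForm L h β f} ⊆
      {e : ℝ | ∃ f : Cfg L → ℝ, (∀ σ, 0 ≤ f σ ∧ f σ ≤ 1) ∧
        (∀ σ ∈ B, f σ = 1) ∧ (∀ σ ∈ A, f σ = 0) ∧ e = dirForm L h β f} := by
    rintro A B e ⟨f, hf, hA, hB, rfl⟩
    exact ⟨fun σ => 1 - f σ,
      fun σ => ⟨by show (0:ℝ) ≤ 1 - f σ; linarith [(hf σ).2],
        by show 1 - f σ ≤ 1; linarith [(hf σ).1]⟩,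
      fun σ hσ => by show 1 - f σ = 1; rw [hB σ hσ]; ring,
      fun σ hσ => by show 1 - f σ = 0; rw [hA σ hσ]; ring,
      (dirForm_one_sub L h β f).symm⟩
  rw [capa, capa]
  rw [Set.Subset.antisymm (key A B) (key B A)]

lemma capa_mono_right (A B B' : Set (Cfg L)) (hBB : B ⊆ B') (f₀ : Cfg L → ℝ)
    (hf₀ : ∀ σ, 0 ≤ f₀ σ ∧ f₀ σ ≤ 1) (hA₀ : ∀ σ ∈ A, f₀ σ = 1) (hB₀ : ∀ σ ∈ B', f₀ σ = 0) :
    capa L h β A B ≤ capa L h β A B' := by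
  rw [capa, capa]
  refine csInf_le_csInf (capa_bddBelow L h β A B) ⟨dirForm L h β f₀, f₀, hf₀, hA₀, hB₀, rfl⟩ ?_
  rintro e ⟨f, hf, hA, hB', rfl⟩
  exact ⟨f, hf, hA, fun σ hσ => hB' σ (hBB hσ), rfl⟩

lemma capa_union_le (A B C : Set (Cfg L)) (f₁ f₂ : Cfg L → ℝ)
    (hf₁ : ∀ σ, 0 ≤ f₁ σ ∧ f₁ σ ≤ 1) (hA₁ : ∀ σ ∈ A, f₁ σ = 1) (hB₁ : ∀ σ ∈ B, f₁ σ = 0)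
    (hf₂ : ∀ σ, 0 ≤ f₂ σ ∧ f₂ σ ≤ 1) (hA₂ : ∀ σ ∈ A, f₂ σ = 1) (hC₂ : ∀ σ ∈ C, f₂ σ = 0) :
    capa L h β A (B ∪ C) ≤ capa L h β A B + capa L h β A C := by
  set S1 := {e : ℝ | ∃ f : Cfg L → ℝ, (∀ σ, 0 ≤ f σ ∧ f σ ≤ 1) ∧
      (∀ σ ∈ A, f σ = 1) ∧ (∀ σ ∈ B, f σ = 0) ∧ e = dirForm L h β f} with hS1
  set S2 := {e : ℝ | ∃ f : Cfg L → ℝ, (∀ σ, 0 ≤ f σ ∧ f σ ≤ 1) ∧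
      (∀ σ ∈ A, f σ = 1) ∧ (∀ σ ∈ C, f σ = 0) ∧ e = dirForm L h β f} with hS2
  have hS1ne : S1.Nonempty := ⟨dirForm L h β f₁, f₁, hf₁, hA₁, hB₁, rfl⟩
  have hS2ne : S2.Nonempty := ⟨dirForm L h β f₂, f₂, hf₂, hA₂, hC₂, rfl⟩
  have key : ∀ e₁ ∈ S1, ∀ e₂ ∈ S2, capa L h β A (B ∪ C) ≤ e₁ + e₂ := by
    rintro e₁ ⟨g₁, hg₁, hgA₁, hgB₁, rfl⟩ e₂ ⟨g₂, hg₂, hgA₂, hgC₂, rfl⟩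
    have hfeas : ∀ σ, 0 ≤ min (g₁ σ) (g₂ σ) ∧ min (g₁ σ) (g₂ σ) ≤ 1 := fun σ =>
      ⟨le_min (hg₁ σ).1 (hg₂ σ).1, min_le_of_left_le (hg₁ σ).2⟩
    have hfA : ∀ σ ∈ A, min (g₁ σ) (g₂ σ) = 1 := fun σ hσ => by
      rw [hgA₁ σ hσ, hgA₂ σ hσ, min_self]
    have hfBC : ∀ σ ∈ B ∪ C, min (g₁ σ) (g₂ σ) = 0 := by
      rintro σ (hσ | hσ)
      · rw [hgB₁ σ hσ]; exact min_eq_left (hg₂ σ).1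
      · rw [hgC₂ σ hσ]; exact min_eq_right (hg₁ σ).1
    calc capa L h β A (B ∪ C) ≤ dirForm L h β (fun σ => min (g₁ σ) (g₂ σ)) :=
          capa_le L h β _ _ _ hfeas hfA hfBC
      _ ≤ dirForm L h β g₁ + dirForm L h β g₂ := dirForm_min_le L h β g₁ g₂
  have h2 : ∀ e₁ ∈ S1, capa L h β A (B ∪ C) - e₁ ≤ sInf S2 := fun e₁ h₁ =>
    le_csInf hS2ne fun e₂ h₂ => by linarith [key e₁ h₁ e₂ h₂]
  have h3 : capa L h β A (B ∪ C) - sInf S2 ≤ sInf S1 :=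
    le_csInf hS1ne fun e₁ h₁ => by linarith [h2 e₁ h₁]
  have e1 : capa L h β A B = sInf S1 := by rw [capa]
  have e2 : capa L h β A C = sInf S2 := by rw [capa]
  rw [e1, e2]
  linarith

end BCAux

namespace BCAux
open BC Real Finset

set_option linter.unusedSectionVars false

variable (L : ℕ) [NeZero L] (h β : ℝ)

/-- Indicator of the complement of `-1`, used as a test function. -/
def cutf : Cfg L → ℝ := fun σ => if σ = cminus L then 0 else 1

lemma cutf_mem01 : ∀ σ, 0 ≤ cutf L σ ∧ cutf L σ ≤ 1 := by
  intro σ; unfold cutf; split <;> norm_num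

lemma cutf_sq_le_one (σ τ : Cfg L) : (cutf L τ - cutf L σ) ^ 2 ≤ 1 := by
  unfold cutf; split_ifs <;> norm_num

lemma dirForm_cutf_le (hβ : 0 ≤ β) (hh0 : 0 ≤ h) (hh6 : h ≤ 6) (hL2 : 2 ≤ L) :
    dirForm L h β (cutf L) ≤
      2 * (L : ℝ) ^ 2 * Real.exp (-β * (2 + h * ((L : ℝ) ^ 2 - 1))) := by
  set M := Real.exp (-β * (2 + h * ((L : ℝ) ^ 2 - 1))) with hM
  have hM0 : 0 ≤ M := (Real.exp_pos _).le
  have hup : ∀ x : Site L, gw L h β (flipUp L (cminus L) x) ≤ M :=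
    fun x => gw_le L h β hβ (ham_up_cminus L h hL2 x)
  have hdown : ∀ x : Site L, gw L h β (flipDown L (cminus L) x) ≤ M := by
    intro x
    apply gw_le L h β hβ
    have := ham_down_cminus L h hL2 x
    nlinarith
  rw [dirForm, Finset.sum_comm]
  have hxbound : ∀ x : Site L, (∑ σ : Cfg L,
      (min (gw L h β σ) (gw L h β (flipUp L σ x)) * (cutf L (flipUp L σ x) - cutf L σ) ^ 2 +
       min (gw L h β σ) (gw L h β (flipDown L σ x)) * (cutf L (flipDown L σ x) - cutf L σ) ^ 2))
      ≤ 4 * M := by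
    intro x
    have pt : ∀ σ : Cfg L,
        (min (gw L h β σ) (gw L h β (flipUp L σ x)) * (cutf L (flipUp L σ x) - cutf L σ) ^ 2 +
         min (gw L h β σ) (gw L h β (flipDown L σ x)) * (cutf L (flipDown L σ x) - cutf L σ) ^ 2)
        ≤ M * ((if σ = cminus L then 1 else 0) + (if σ = flipDown L (cminus L) x then 1 else 0))
        + M * ((if σ = cminus L then 1 else 0) + (if σ = flipUp L (cminus L) x then 1 else 0)) := by
      intro σ
      have part1 : min (gw L h β σ) (gw L h β (flipUp L σ x)) *
          (cutf L (flipUp L σ x) - cutf L σ) ^ 2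
          ≤ M * ((if σ = cminus L then 1 else 0) + (if σ = flipDown L (cminus L) x then 1 else 0)) := by
        by_cases h1 : σ = cminus L
        · subst h1
          have hgw : min (gw L h β (cminus L)) (gw L h β (flipUp L (cminus L) x)) ≤ M :=
            le_trans (min_le_right _ _) (hup x)
          have hmin0 : 0 ≤ min (gw L h β (cminus L)) (gw L h β (flipUp L (cminus L) x)) :=
            le_min (gw_pos L h β _).le (gw_pos L h β _).le
          have hsq := cutf_sq_le_one L (cminus L) (flipUp L (cminus L) x)
          have g2 := ite01_nonneg (cminus L = flipDown L (cminus L) x)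
          have : min (gw L h β (cminus L)) (gw L h β (flipUp L (cminus L) x)) *
              (cutf L (flipUp L (cminus L) x) - cutf L (cminus L)) ^ 2 ≤ M := by
            nlinarith [sq_nonneg (cutf L (flipUp L (cminus L) x) - cutf L (cminus L))]
          rw [if_pos rfl]
          nlinarith
        · by_cases h2 : σ = flipDown L (cminus L) x
          · have hgw : min (gw L h β σ) (gw L h β (flipUp L σ x)) ≤ M := by
              refine le_trans (min_le_left _ _) ?_
              rw [h2]; exact hdown x
            have hmin0 : 0 ≤ min (gw L h β σ) (gw L h β (flipUp L σ x)) :=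
              le_min (gw_pos L h β _).le (gw_pos L h β _).le
            have hsq := cutf_sq_le_one L σ (flipUp L σ x)
            have g1 := ite01_nonneg (σ = cminus L)
            have : min (gw L h β σ) (gw L h β (flipUp L σ x)) *
                (cutf L (flipUp L σ x) - cutf L σ) ^ 2 ≤ M := by
              nlinarith [sq_nonneg (cutf L (flipUp L σ x) - cutf L σ)]
            rw [if_pos h2]
            nlinarith
          · have hne : flipUp L σ x ≠ cminus L := by
              intro he
              apply h2
              rw [← flipDown_flipUp L σ x, he]
            have hΔ : cutf L (flipUp L σ x) - cutf L σ = 0 := by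
              unfold cutf
              rw [if_neg h1, if_neg hne]
              ring
            rw [hΔ]
            have g1 := ite01_nonneg (σ = cminus L)
            have g2 := ite01_nonneg (σ = flipDown L (cminus L) x)
            nlinarith
      have part2 : min (gw L h β σ) (gw L h β (flipDown L σ x)) *
          (cutf L (flipDown L σ x) - cutf L σ) ^ 2
          ≤ M * ((if σ = cminus L then 1 else 0) + (if σ = flipUp L (cminus L) x then 1 else 0)) := by
        by_cases h1 : σ = cminus L
        · subst h1
          have hgw : min (gw L h β (cminus L)) (gw L h β (flipDown L (cminus L) x)) ≤ M :=
            le_trans (min_le_right _ _) (hdown x)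
          have hmin0 : 0 ≤ min (gw L h β (cminus L)) (gw L h β (flipDown L (cminus L) x)) :=
            le_min (gw_pos L h β _).le (gw_pos L h β _).le
          have hsq := cutf_sq_le_one L (cminus L) (flipDown L (cminus L) x)
          have g2 := ite01_nonneg (cminus L = flipUp L (cminus L) x)
          have : min (gw L h β (cminus L)) (gw L h β (flipDown L (cminus L) x)) *
              (cutf L (flipDown L (cminus L) x) - cutf L (cminus L)) ^ 2 ≤ M := by
            nlinarith [sq_nonneg (cutf L (flipDown L (cminus L) x) - cutf L (cminus L))]
          rw [if_pos rfl]
          nlinarith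
        · by_cases h2 : σ = flipUp L (cminus L) x
          · have hgw : min (gw L h β σ) (gw L h β (flipDown L σ x)) ≤ M := by
              refine le_trans (min_le_left _ _) ?_
              rw [h2]; exact hup x
            have hmin0 : 0 ≤ min (gw L h β σ) (gw L h β (flipDown L σ x)) :=
              le_min (gw_pos L h β _).le (gw_pos L h β _).le
            have hsq := cutf_sq_le_one L σ (flipDown L σ x)
            have g1 := ite01_nonneg (σ = cminus L)
            have : min (gw L h β σ) (gw L h β (flipDown L σ x)) *
                (cutf L (flipDown L σ x) - cutf L σ) ^ 2 ≤ M := by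
              nlinarith [sq_nonneg (cutf L (flipDown L σ x) - cutf L σ)]
            rw [if_pos h2]
            nlinarith
          · have hne : flipDown L σ x ≠ cminus L := by
              intro he
              apply h2
              rw [← flipUp_flipDown L σ x, he]
            have hΔ : cutf L (flipDown L σ x) - cutf L σ = 0 := by
              unfold cutf
              rw [if_neg h1, if_neg hne]
              ring
            rw [hΔ]
            have g1 := ite01_nonneg (σ = cminus L)
            have g2 := ite01_nonneg (σ = flipUp L (cminus L) x)
            nlinarith
      linarith
    calc (∑ σ : Cfg L,
        (min (gw L h β σ) (gw L h β (flipUp L σ x)) * (cutf L (flipUp L σ x) - cutf L σ) ^ 2 +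
         min (gw L h β σ) (gw L h β (flipDown L σ x)) * (cutf L (flipDown L σ x) - cutf L σ) ^ 2))
        ≤ ∑ σ : Cfg L,
          (M * ((if σ = cminus L then 1 else 0) + (if σ = flipDown L (cminus L) x then 1 else 0))
          + M * ((if σ = cminus L then 1 else 0) + (if σ = flipUp L (cminus L) x then 1 else 0))) :=
          Finset.sum_le_sum (fun σ _ => pt σ)
      _ = 4 * M := by
          rw [Finset.sum_add_distrib, ← Finset.mul_sum, ← Finset.mul_sum,
            Finset.sum_add_distrib, Finset.sum_add_distrib,
            Finset.sum_ite_eq' Finset.univ (cminus L) (fun _ => (1:ℝ)),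
            Finset.sum_ite_eq' Finset.univ (flipDown L (cminus L) x) (fun _ => (1:ℝ)),
            Finset.sum_ite_eq' Finset.univ (flipUp L (cminus L) x) (fun _ => (1:ℝ))]
          simp only [Finset.mem_univ, if_pos]
          ring
  calc (1 / 2 : ℝ) * ∑ x : Site L, (∑ σ : Cfg L,
      (min (gw L h β σ) (gw L h β (flipUp L σ x)) * (cutf L (flipUp L σ x) - cutf L σ) ^ 2 +
       min (gw L h β σ) (gw L h β (flipDown L σ x)) * (cutf L (flipDown L σ x) - cutf L σ) ^ 2))
      ≤ (1 / 2 : ℝ) * ∑ _x : Site L, 4 * M := by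
        apply mul_le_mul_of_nonneg_left _ (by norm_num)
        exact Finset.sum_le_sum (fun x _ => hxbound x)
    _ = 2 * (L : ℝ) ^ 2 * M := by
        rw [Finset.sum_const, Finset.card_univ, card_site]
        push_cast
        ring

/-- Lower bound on the Dirichlet form via the lexicographic path from `0` to `+1`. -/
lemma dirForm_path_ge (hβ : 0 ≤ β) (hh0 : 0 ≤ h) (hL2 : 2 ≤ L) (f : Cfg L → ℝ) :
    Real.exp (-β * (4 * (L : ℝ))) * (f (cplus L) - f (czero L)) ^ 2 / (2 * (L : ℝ) ^ 2)
      ≤ dirForm L h β f := by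
  set w := Real.exp (-β * (4 * (L : ℝ))) with hw
  have hw0 : 0 ≤ w := (Real.exp_pos _).le
  have hgw : ∀ k : ℕ, w ≤ gw L h β (pcfg L k) :=
    fun k => le_gw L h β hβ (ham_pcfg_le L h hh0 hL2 k)
  set F : Cfg L → ℝ := fun σ => ∑ x : Site L,
      (min (gw L h β σ) (gw L h β (flipUp L σ x)) * (f (flipUp L σ x) - f σ) ^ 2 +
       min (gw L h β σ) (gw L h β (flipDown L σ x)) * (f (flipDown L σ x) - f σ) ^ 2) with hF
  have hF0 : ∀ σ, 0 ≤ F σ := fun σ => dirForm_term_nonneg L h β f σ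
  have hdf : dirForm L h β f = (1 / 2) * ∑ σ : Cfg L, F σ := by rw [dirForm]
  have hinj : ∀ k ∈ Finset.range (L * L), ∀ k' ∈ Finset.range (L * L),
      pcfg L k = pcfg L k' → k = k' := by
    intro k hk k' hk' he
    rw [Finset.mem_range] at hk hk'
    by_contra hne
    rcases Nat.lt_or_ge k k' with hlt | hge
    · exact pcfg_ne L hlt hk he
    · exact pcfg_ne L (by omega) hk' he.symm
  have h2 : ∑ k ∈ Finset.range (L * L), F (pcfg L k) ≤ ∑ σ : Cfg L, F σ := by
    rw [← Finset.sum_image (g := pcfg L) (f := F) hinj]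
    exact Finset.sum_le_sum_of_subset_of_nonneg (Finset.subset_univ _) (fun i _ _ => hF0 i)
  have h3 : ∀ k ∈ Finset.range (L * L),
      w * (f (pcfg L (k + 1)) - f (pcfg L k)) ^ 2 ≤ F (pcfg L k) := by
    intro k hk
    rw [Finset.mem_range] at hk
    have hstep := pcfg_step L hk
    have hsingle : min (gw L h β (pcfg L k)) (gw L h β (flipUp L (pcfg L k) (psite L k))) *
          (f (flipUp L (pcfg L k) (psite L k)) - f (pcfg L k)) ^ 2
        + min (gw L h β (pcfg L k)) (gw L h β (flipDown L (pcfg L k) (psite L k))) *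
          (f (flipDown L (pcfg L k) (psite L k)) - f (pcfg L k)) ^ 2 ≤ F (pcfg L k) := by
      apply Finset.single_le_sum (f := fun x : Site L =>
        (min (gw L h β (pcfg L k)) (gw L h β (flipUp L (pcfg L k) x)) *
          (f (flipUp L (pcfg L k) x) - f (pcfg L k)) ^ 2 +
         min (gw L h β (pcfg L k)) (gw L h β (flipDown L (pcfg L k) x)) *
          (f (flipDown L (pcfg L k) x) - f (pcfg L k)) ^ 2))
        (fun x _ => ?_) (Finset.mem_univ (psite L k))
      beta_reduce
      have c1 : 0 ≤ min (gw L h β (pcfg L k)) (gw L h β (flipUp L (pcfg L k) x)) :=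
        le_min (gw_pos L h β _).le (gw_pos L h β _).le
      have c2 : 0 ≤ min (gw L h β (pcfg L k)) (gw L h β (flipDown L (pcfg L k) x)) :=
        le_min (gw_pos L h β _).le (gw_pos L h β _).le
      nlinarith [sq_nonneg (f (flipUp L (pcfg L k) x) - f (pcfg L k)),
        sq_nonneg (f (flipDown L (pcfg L k) x) - f (pcfg L k))]
    have hmin : w ≤ min (gw L h β (pcfg L k)) (gw L h β (flipUp L (pcfg L k) (psite L k))) := by
      rw [hstep]
      exact le_min (hgw k) (hgw (k + 1))
    have hterm : w * (f (pcfg L (k + 1)) - f (pcfg L k)) ^ 2 ≤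
        min (gw L h β (pcfg L k)) (gw L h β (flipUp L (pcfg L k) (psite L k))) *
          (f (flipUp L (pcfg L k) (psite L k)) - f (pcfg L k)) ^ 2 := by
      rw [hstep]
      exact mul_le_mul_of_nonneg_right (by rw [← hstep]; exact hmin) (sq_nonneg _)
    have c2 : 0 ≤ min (gw L h β (pcfg L k)) (gw L h β (flipDown L (pcfg L k) (psite L k))) :=
      le_min (gw_pos L h β _).le (gw_pos L h β _).le
    nlinarith [sq_nonneg (f (flipDown L (pcfg L k) (psite L k)) - f (pcfg L k))]
  have h4 : ∑ k ∈ Finset.range (L * L), w * (f (pcfg L (k + 1)) - f (pcfg L k)) ^ 2 ≤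
      ∑ k ∈ Finset.range (L * L), F (pcfg L k) := Finset.sum_le_sum h3
  have htel : ∑ k ∈ Finset.range (L * L), (f (pcfg L (k + 1)) - f (pcfg L k)) =
      f (cplus L) - f (czero L) := by
    rw [Finset.sum_range_sub (fun k => f (pcfg L k)), pcfg_zero, pcfg_top]
  have hcs : (f (cplus L) - f (czero L)) ^ 2 ≤
      (L * L : ℝ) * ∑ k ∈ Finset.range (L * L), (f (pcfg L (k + 1)) - f (pcfg L k)) ^ 2 := by
    have := Finset.sum_mul_sq_le_sq_mul_sq (Finset.range (L * L))
      (fun _ => (1 : ℝ)) (fun k => f (pcfg L (k + 1)) - f (pcfg L k))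
    simp only [one_pow, one_mul, Finset.sum_const, Finset.card_range, nsmul_eq_mul, mul_one]
      at this
    rw [htel] at this
    exact_mod_cast this
  have hL0 : (0 : ℝ) < (L : ℝ) := by
    have := NeZero.pos L
    exact_mod_cast this
  have hSF : w * (∑ k ∈ Finset.range (L * L), (f (pcfg L (k + 1)) - f (pcfg L k)) ^ 2) ≤
      ∑ σ : Cfg L, F σ := by
    rw [Finset.mul_sum]
    exact le_trans h4 h2
  rw [hdf, div_le_iff₀ (by positivity)]
  have e1 := mul_le_mul_of_nonneg_left hcs hw0
  have e2 := mul_le_mul_of_nonneg_left hSF (show (0:ℝ) ≤ (L:ℝ) * (L:ℝ) by positivity)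
  nlinarith

end BCAux


/-- Lemma (500) : `cap(+1, {-1, 0}) / cap(0, {-1, +1}) → 1`. -/
theorem stmt_18 (h : ℝ) (h0 : 0 < h) (h1 : h < 1)
    (hirr : ∀ m : ℤ, (2 : ℝ) / h ≠ (m : ℝ))
    (L : ℝ → ℕ) (hL : ∀ β : ℝ, 2 * (BC.n0 h + 2) ≤ L β)
    (hlim1 : Filter.Tendsto (fun β : ℝ => (L β : ℝ) *
        (Real.exp (-(((BC.n0 h : ℝ) + 1) * h - 2) * β) + Real.exp (-h * β)))
      Filter.atTop (nhds 0))
    (hlim2 : Filter.Tendsto (fun β : ℝ => (L β : ℝ) ^ 4 * Real.exp (-(2 - h) * β))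
      Filter.atTop (nhds 0)) :
    Filter.Tendsto (fun β : ℝ =>
      letI : NeZero (L β) := ⟨by have := hL β; omega⟩
      BC.capa (L β) h β {BC.cplus (L β)} {BC.cminus (L β), BC.czero (L β)} /
        BC.capa (L β) h β {BC.czero (L β)} {BC.cminus (L β), BC.cplus (L β)})
      Filter.atTop (nhds 1) := by
  have hh0 : 0 ≤ h := h0.le
  have hn0 : 2 ≤ BC.n0 h := by
    apply Nat.le_floor
    rw [Nat.cast_ofNat, le_div_iff₀ h0]
    linarith
  rw [← tendsto_sub_nhds_zero_iff]
  apply squeeze_zero_norm' (a := fun β : ℝ => 4 * ((L β : ℝ) ^ 4 * Real.exp (-(2 - h) * β)))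
  swap
  · have := hlim2.const_mul (4 : ℝ)
    simpa using this
  filter_upwards [Filter.eventually_ge_atTop (0 : ℝ)] with β hβ0
  haveI instL : NeZero (L β) := ⟨by have := hL β; omega⟩
  have hL8 : 8 ≤ L β := by have := hL β; omega
  have hL2 : 2 ≤ L β := by omega
  have hLr : (2 : ℝ) * ((BC.n0 h : ℝ) + 2) ≤ (L β : ℝ) := by
    have := hL β
    push_cast
    exact_mod_cast this
  have hfl : (2 : ℝ) / h < (BC.n0 h : ℝ) + 1 := Nat.lt_floor_add_one _
  have h2n : 2 < h * ((BC.n0 h : ℝ) + 1) := by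
    rw [div_lt_iff₀ h0] at hfl
    linarith
  have hhl : 4 ≤ h * (L β : ℝ) := by nlinarith
  have hl0 : (0 : ℝ) < (L β : ℝ) := by positivity
  set m := BC.cminus (L β) with hm
  set z := BC.czero (L β) with hz
  set p := BC.cplus (L β) with hp
  have hpm : p ≠ m := by
    intro he
    have := congrFun he ((0 : ZMod (L β)), (0 : ZMod (L β)))
    rw [hp, hm] at this
    simp only [BC.cplus, BC.cminus] at this
    exact absurd this (by decide)
  have hzm : z ≠ m := by
    intro he
    have := congrFun he ((0 : ZMod (L β)), (0 : ZMod (L β)))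
    rw [hz, hm] at this
    simp only [BC.czero, BC.cminus] at this
    exact absurd this (by decide)
  have hpz : p ≠ z := by
    intro he
    have := congrFun he ((0 : ZMod (L β)), (0 : ZMod (L β)))
    rw [hp, hz] at this
    simp only [BC.cplus, BC.czero] at this
    exact absurd this (by decide)
  set Cn := BC.capa (L β) h β {p} {m, z} with hCn
  set Cd := BC.capa (L β) h β {z} {m, p} with hCd
  set ε := 2 * (L β : ℝ) ^ 2 * Real.exp (-β * (2 + h * ((L β : ℝ) ^ 2 - 1))) with hε
  set w := Real.exp (-β * (4 * (L β : ℝ))) with hw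
  have hε0 : 0 ≤ ε := by positivity
  have hw0 : 0 < w := Real.exp_pos _
  -- indicator test functions
  have indicator_feas : ∀ c : BC.Cfg (L β), ∀ σ, (0 : ℝ) ≤ (if σ = c then (1:ℝ) else 0) ∧
      (if σ = c then (1:ℝ) else 0) ≤ 1 := by
    intro c σ; constructor <;> split <;> norm_num
  -- cut function bound
  have hcut : BC.dirForm (L β) h β (BCAux.cutf (L β)) ≤ ε :=
    BCAux.dirForm_cutf_le (L β) h β hβ0 hh0 (by linarith) hL2
  have hcut_feas := BCAux.cutf_mem01 (L β)
  -- Cn ≤ ε + Cd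
  have hunion_n : Cn ≤ BC.capa (L β) h β {p} {m} + BC.capa (L β) h β {p} {z} := by
    rw [hCn, show ({m, z} : Set (BC.Cfg (L β))) = {m} ∪ {z} from Set.insert_eq m {z}]
    apply BCAux.capa_union_le (L β) h β {p} {m} {z} (BCAux.cutf (L β))
      (fun σ => if σ = p then 1 else 0) hcut_feas
      (fun σ hσ => by rw [Set.mem_singleton_iff] at hσ; subst hσ; exact if_neg hpm)
      (fun σ hσ => by rw [Set.mem_singleton_iff] at hσ; subst hσ; exact if_pos rfl)
      (indicator_feas p)
      (fun σ hσ => by rw [Set.mem_singleton_iff] at hσ; subst hσ; exact if_pos rfl)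
      (fun σ hσ => by rw [Set.mem_singleton_iff] at hσ; subst hσ; exact if_neg (Ne.symm hpz))
  have hpm_le : BC.capa (L β) h β {p} {m} ≤ ε := by
    refine le_trans (BCAux.capa_le (L β) h β {p} {m} (BCAux.cutf (L β)) hcut_feas ?_ ?_) hcut
    · intro σ hσ; rw [Set.mem_singleton_iff] at hσ; subst hσ; exact if_neg hpm
    · intro σ hσ; rw [Set.mem_singleton_iff] at hσ; subst hσ; exact if_pos rfl
  have hpz_le : BC.capa (L β) h β {p} {z} ≤ Cd := by
    rw [BCAux.capa_comm]
    rw [hCd]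
    apply BCAux.capa_mono_right (L β) h β {z} {p} {m, p} (by
        intro σ hσ; rw [Set.mem_singleton_iff] at hσ; subst hσ; exact Set.mem_insert_iff.2 (Or.inr rfl))
      (fun σ => if σ = z then 1 else 0) (indicator_feas z)
      (fun σ hσ => by rw [Set.mem_singleton_iff] at hσ; subst hσ; exact if_pos rfl)
      (by
        rintro σ (hσ | hσ)
        · subst hσ; exact if_neg (Ne.symm hzm)
        · rw [Set.mem_singleton_iff] at hσ; subst hσ; exact if_neg hpz)
  have hCn_le : Cn ≤ ε + Cd := by linarith
  -- Cd ≤ ε + Cn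
  have hunion_d : Cd ≤ BC.capa (L β) h β {z} {m} + BC.capa (L β) h β {z} {p} := by
    rw [hCd, show ({m, p} : Set (BC.Cfg (L β))) = {m} ∪ {p} from Set.insert_eq m {p}]
    apply BCAux.capa_union_le (L β) h β {z} {m} {p} (BCAux.cutf (L β))
      (fun σ => if σ = z then 1 else 0) hcut_feas
      (fun σ hσ => by rw [Set.mem_singleton_iff] at hσ; subst hσ; exact if_neg hzm)
      (fun σ hσ => by rw [Set.mem_singleton_iff] at hσ; subst hσ; exact if_pos rfl)
      (indicator_feas z)
      (fun σ hσ => by rw [Set.mem_singleton_iff] at hσ; subst hσ; exact if_pos rfl)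
      (fun σ hσ => by rw [Set.mem_singleton_iff] at hσ; subst hσ; exact if_neg hpz)
  have hzm_le : BC.capa (L β) h β {z} {m} ≤ ε := by
    refine le_trans (BCAux.capa_le (L β) h β {z} {m} (BCAux.cutf (L β)) hcut_feas ?_ ?_) hcut
    · intro σ hσ; rw [Set.mem_singleton_iff] at hσ; subst hσ; exact if_neg hzm
    · intro σ hσ; rw [Set.mem_singleton_iff] at hσ; subst hσ; exact if_pos rfl
  have hzp_le : BC.capa (L β) h β {z} {p} ≤ Cn := by
    rw [BCAux.capa_comm]
    rw [hCn]
    apply BCAux.capa_mono_right (L β) h β {p} {z} {m, z} (by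
        intro σ hσ; rw [Set.mem_singleton_iff] at hσ; subst hσ; exact Set.mem_insert_iff.2 (Or.inr rfl))
      (fun σ => if σ = p then 1 else 0) (indicator_feas p)
      (fun σ hσ => by rw [Set.mem_singleton_iff] at hσ; subst hσ; exact if_pos rfl)
      (by
        rintro σ (hσ | hσ)
        · subst hσ; exact if_neg hpm.symm
        · rw [Set.mem_singleton_iff] at hσ; subst hσ; exact if_neg (Ne.symm hpz))
  have hCd_le : Cd ≤ ε + Cn := by linarith
  -- lower bound on Cd
  have hCd_ge : w / (2 * (L β : ℝ) ^ 2) ≤ Cd := by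
    rw [hCd]
    apply BCAux.le_capa (L β) h β {z} {m, p} _ (fun σ => if σ = z then 1 else 0)
      (indicator_feas z)
      (fun σ hσ => by rw [Set.mem_singleton_iff] at hσ; subst hσ; exact if_pos rfl)
      (by
        rintro σ (hσ | hσ)
        · subst hσ; exact if_neg (Ne.symm hzm)
        · rw [Set.mem_singleton_iff] at hσ; subst hσ; exact if_neg hpz)
    intro f hf hA hB
    have := BCAux.dirForm_path_ge (L β) h β hβ0 hh0 hL2 f
    have hfz : f z = 1 := hA z rfl
    have hfp : f p = 0 := hB p (Set.mem_insert_iff.2 (Or.inr rfl))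
    rw [hz] at hfz
    rw [hp] at hfp
    rw [hfz, hfp] at this
    calc w / (2 * (L β : ℝ) ^ 2)
        = w * ((0:ℝ) - 1) ^ 2 / (2 * (L β : ℝ) ^ 2) := by ring
      _ ≤ BC.dirForm (L β) h β f := this
      _ = BC.dirForm (L β) h β f := rfl
  have hCd_pos : 0 < Cd := lt_of_lt_of_le (by positivity) hCd_ge
  -- final numeric estimate
  have habs : |Cn - Cd| ≤ ε := abs_sub_le_iff.2 ⟨by linarith, by linarith⟩
  have key : |Cn - Cd| / Cd ≤ 4 * ((L β : ℝ) ^ 4 * Real.exp (-(2 - h) * β)) := by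
    have s1 : |Cn - Cd| / Cd ≤ ε / Cd := by gcongr
    have s2 : ε / Cd ≤ ε / (w / (2 * (L β : ℝ) ^ 2)) :=
      div_le_div_of_nonneg_left hε0 (by positivity) hCd_ge
    have s3 : ε / (w / (2 * (L β : ℝ) ^ 2)) = ε * (2 * (L β : ℝ) ^ 2) / w := by
      rw [div_div_eq_mul_div]
    have hexp : Real.exp (-β * (2 + h * ((L β : ℝ) ^ 2 - 1))) ≤
        Real.exp (-(2 - h) * β) * Real.exp (-β * (4 * (L β : ℝ))) := by
      rw [← Real.exp_add]
      apply Real.exp_le_exp.2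
      have hkey : 0 ≤ β * ((L β : ℝ) * (h * (L β : ℝ) - 4)) := by
        apply mul_nonneg hβ0
        apply mul_nonneg hl0.le
        linarith
      nlinarith
    have s4 : ε * (2 * (L β : ℝ) ^ 2) ≤ 4 * ((L β : ℝ) ^ 4 * Real.exp (-(2 - h) * β)) * w := by
      calc ε * (2 * (L β : ℝ) ^ 2)
          = 4 * (L β : ℝ) ^ 4 * Real.exp (-β * (2 + h * ((L β : ℝ) ^ 2 - 1))) := by
            rw [hε]; ring
        _ ≤ 4 * (L β : ℝ) ^ 4 * (Real.exp (-(2 - h) * β) * Real.exp (-β * (4 * (L β : ℝ)))) := by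
            apply mul_le_mul_of_nonneg_left hexp (by positivity)
        _ = 4 * ((L β : ℝ) ^ 4 * Real.exp (-(2 - h) * β)) * w := by rw [hw]; ring
    have s5 : ε * (2 * (L β : ℝ) ^ 2) / w ≤ 4 * ((L β : ℝ) ^ 4 * Real.exp (-(2 - h) * β)) := by
      rw [div_le_iff₀ hw0]
      exact s4
    linarith
  show ‖Cn / Cd - 1‖ ≤ 4 * ((L β : ℝ) ^ 4 * Real.exp (-(2 - h) * β))
  rw [Real.norm_eq_abs, show Cn / Cd - 1 = (Cn - Cd) / Cd by field_simp, abs_div,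
    abs_of_pos hCd_pos]
  exact key
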